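/- For a real random variable Y with median μ, define R(y,t) = |y - (μ+t)| - |y - μ| + t·(I{y > μ} - I{y ≤ μ}). If Y has a density f that is continuous and positive at μ, then E R(Y,t) = f(μ) t² + o(t²) as t → 0. -/

import Mathlib

open MeasureTheory Filter Asymptotics Set
open scoped ENNReal NNReal

/-- Section 3A of Hjort–Pollard: for `Y` with density `f` continuous and
positive at its median `μ`, the remainder
`R(y,t) = |y-(μ+t)| - |y-μ| + t(I{y>μ} - I{y≤μ})` satisfies
`E R(Y,t) = f(μ) t² + o(t²)` as `t → 0`. -/
lemma hp_Rform (μ t y : ℝ) :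
    |y - (μ + t)| - |y - μ|
      + t * ((if μ < y then (1:ℝ) else 0) - (if y ≤ μ then (1:ℝ) else 0))
      = (Set.uIoc μ (μ + t)).indicator (fun y => 2 * |μ + t - y|) y := by
  by_cases h : y ∈ Set.uIoc μ (μ + t)
  · rw [Set.indicator_of_mem h]
    rw [Set.mem_uIoc] at h
    rcases h with ⟨h1, h2⟩ | ⟨h1, h2⟩
    · rw [abs_of_nonpos (by linarith : y - (μ + t) ≤ 0),
        abs_of_nonneg (by linarith : (0:ℝ) ≤ y - μ),
        abs_of_nonneg (by linarith : (0:ℝ) ≤ μ + t - y),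
        if_pos h1, if_neg (not_le.2 h1)]
      ring
    · rw [abs_of_nonneg (by linarith : (0:ℝ) ≤ y - (μ + t)),
        abs_of_nonpos (by linarith : y - μ ≤ 0),
        abs_of_nonpos (by linarith : μ + t - y ≤ 0),
        if_neg (not_lt.2 h2), if_pos h2]
      ring
  · rw [Set.indicator_of_notMem h]
    rw [Set.mem_uIoc] at h
    push_neg at h
    rcases le_or_gt y μ with hy | hy
    · have hyt : y ≤ μ + t := by
        by_contra hc
        push_neg at hc
        exact absurd hy (not_le.2 (h.2 hc))
      rw [abs_of_nonpos (by linarith : y - (μ + t) ≤ 0),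
        abs_of_nonpos (by linarith : y - μ ≤ 0),
        if_neg (not_lt.2 hy), if_pos hy]
      ring
    · have hyt : μ + t < y := h.1 hy
      rw [abs_of_nonneg (by linarith : (0:ℝ) ≤ y - (μ + t)),
        abs_of_nonneg (by linarith : (0:ℝ) ≤ y - μ),
        if_pos hy, if_neg (not_le.2 hy)]
      ring

lemma hp_area (μ t : ℝ) : (∫ y in Set.uIoc μ (μ + t), 2 * |μ + t - y|) = t ^ 2 := by
  rcases le_total 0 t with ht | ht
  · rw [Set.uIoc_of_le (by linarith : μ ≤ μ + t)]
    rw [setIntegral_congr_fun measurableSet_Ioc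
      (fun y hy => by simp [abs_of_nonneg (by linarith [hy.2] : (0:ℝ) ≤ μ + t - y)] :
        EqOn (fun y => 2 * |μ + t - y|) (fun y => 2 * ((μ + t) - y)) (Ioc μ (μ + t)))]
    rw [← intervalIntegral.integral_of_le (by linarith : μ ≤ μ + t)]
    have h1 : (∫ y in μ..(μ + t), 2 * ((μ + t) - y))
        = 2 * (((μ+t) - μ) • (μ + t) - ((μ+t)^2 - μ^2)/2) := by
      rw [intervalIntegral.integral_const_mul,
        intervalIntegral.integral_sub intervalIntegrable_const intervalIntegral.intervalIntegrable_id,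
        intervalIntegral.integral_const, integral_id]
    rw [h1]; simp only [smul_eq_mul]; ring
  · rw [Set.uIoc_of_ge (by linarith : μ + t ≤ μ)]
    rw [setIntegral_congr_fun measurableSet_Ioc
      (fun y hy => by simp [abs_of_nonpos (by linarith [hy.1] : μ + t - y ≤ 0)] :
        EqOn (fun y => 2 * |μ + t - y|) (fun y => 2 * (y - (μ + t))) (Ioc (μ + t) μ))]
    rw [← intervalIntegral.integral_of_le (by linarith : μ + t ≤ μ)]
    have h1 : (∫ y in (μ + t)..μ, 2 * (y - (μ + t)))
        = 2 * ((μ^2 - (μ+t)^2)/2 - (μ - (μ+t)) • (μ + t)) := by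
      rw [intervalIntegral.integral_const_mul,
        intervalIntegral.integral_sub intervalIntegral.intervalIntegrable_id intervalIntegrable_const,
        intervalIntegral.integral_const, integral_id]
    rw [h1]; simp only [smul_eq_mul]; ring

lemma hp_mem_bounds {μ t y : ℝ} (hy : y ∈ Set.uIoc μ (μ + t)) :
    |μ + t - y| ≤ |t| ∧ |y - μ| ≤ |t| := by
  rw [Set.mem_uIoc] at hy
  rcases hy with ⟨h1, h2⟩ | ⟨h1, h2⟩ <;>
    refine ⟨abs_le.2 ⟨?_, ?_⟩, abs_le.2 ⟨?_, ?_⟩⟩ <;>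
    nlinarith [le_abs_self t, neg_abs_le t]

lemma hp_vol (μ t : ℝ) : volume (Set.uIoc μ (μ + t)) = ENNReal.ofReal |t| := by
  rcases le_total 0 t with ht | ht
  · rw [Set.uIoc_of_le (by linarith : μ ≤ μ + t), Real.volume_Ioc, abs_of_nonneg ht]
    norm_num
  · rw [Set.uIoc_of_ge (by linarith : μ + t ≤ μ), Real.volume_Ioc, abs_of_nonpos ht]
    norm_num

theorem median_remainder_expectation
    {Ω : Type*} [MeasurableSpace Ω] (ℙ : Measure Ω) [IsProbabilityMeasure ℙ]
    (Y : Ω → ℝ) (hY : Measurable Y)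
    (f : ℝ → ℝ) (hf_nonneg : ∀ y, 0 ≤ f y) (hf_meas : Measurable f)
    (hdens : Measure.map Y ℙ = volume.withDensity (fun y => ENNReal.ofReal (f y)))
    (μ : ℝ)
    (hmed : ℙ {ω | Y ω ≤ μ} = 1/2)
    (hf_cont : ContinuousAt f μ) (hf_pos : 0 < f μ)
    (R : ℝ → ℝ → ℝ)
    (hR : ∀ y t, R y t = |y - (μ + t)| - |y - μ|
        + t * ((if μ < y then (1:ℝ) else 0) - (if y ≤ μ then (1:ℝ) else 0))) :
    (fun t => (∫ ω, R (Y ω) t ∂ℙ) - f μ * t ^ 2) =o[nhds (0:ℝ)] fun t => t ^ 2 := by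
  have hprob : IsProbabilityMeasure (Measure.map Y ℙ) :=
    Measure.isProbabilityMeasure_map hY.aemeasurable
  -- f is integrable
  have hlint : (∫⁻ y, ENNReal.ofReal (f y)) = 1 := by
    have h1 := hprob.measure_univ
    rw [hdens, withDensity_apply _ MeasurableSet.univ, Measure.restrict_univ] at h1
    exact h1
  have hf_int : Integrable f (volume : Measure ℝ) := by
    refine ⟨hf_meas.aestronglyMeasurable, ?_⟩
    rw [hasFiniteIntegral_iff_ofReal (Eventually.of_forall hf_nonneg)]
    rw [hlint]; exact ENNReal.one_lt_top
  -- measurability of R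
  have hRmeas : ∀ t, Measurable fun y => R y t := by
    intro t
    simp only [hR]
    apply Measurable.add
    · exact ((measurable_id.sub measurable_const).abs.sub
        ((measurable_id.sub measurable_const).abs))
    · exact measurable_const.mul
        ((Measurable.ite (measurableSet_lt measurable_const measurable_id)
          measurable_const measurable_const).sub
         (Measurable.ite (measurableSet_le measurable_id measurable_const)
          measurable_const measurable_const))
  -- key identity
  have key : ∀ t, (∫ ω, R (Y ω) t ∂ℙ)
      = ∫ y in Set.uIoc μ (μ + t), 2 * |μ + t - y| * f y := by
    intro t
    rw [← integral_map hY.aemeasurable (hRmeas t).aestronglyMeasurable, hdens]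
    rw [show (fun y => ENNReal.ofReal (f y)) = fun y => ((f y).toNNReal : ℝ≥0∞) from rfl]
    rw [integral_withDensity_eq_integral_smul hf_meas.real_toNNReal]
    have he : (fun y => (f y).toNNReal • R y t)
        = (Set.uIoc μ (μ + t)).indicator (fun y => 2 * |μ + t - y| * f y) := by
      funext y
      rw [NNReal.smul_def, smul_eq_mul, Real.coe_toNNReal _ (hf_nonneg y), hR,
        hp_Rform μ t y]
      by_cases h : y ∈ Set.uIoc μ (μ + t)
      · rw [Set.indicator_of_mem h, Set.indicator_of_mem h]; ring
      · rw [Set.indicator_of_notMem h, Set.indicator_of_notMem h, mul_zero]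
    rw [he, integral_indicator measurableSet_uIoc]
  have key2 : ∀ t : ℝ, f μ * t ^ 2
      = ∫ y in Set.uIoc μ (μ + t), 2 * |μ + t - y| * f μ := by
    intro t
    rw [integral_mul_const, hp_area μ t, mul_comm]
  -- integrability on the small interval
  have hint1 : ∀ t : ℝ, IntegrableOn (fun y => 2 * |μ + t - y| * f y)
      (Set.uIoc μ (μ + t)) volume := by
    intro t
    refine Integrable.mono' ((hf_int.const_mul (2 * |t|)).integrableOn)
      ((((measurable_const.sub measurable_id).abs.const_mul 2).mul
        hf_meas).aestronglyMeasurable) ?_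
    filter_upwards [ae_restrict_mem measurableSet_uIoc] with y hy
    have h1 := (hp_mem_bounds hy).1
    have h2 := hf_nonneg y
    rw [Real.norm_eq_abs, abs_mul, abs_of_nonneg h2,
      abs_of_nonneg (by positivity : (0:ℝ) ≤ 2 * |μ + t - y|)]
    have : 2 * |μ + t - y| ≤ 2 * |t| := by linarith
    nlinarith
  have hint2 : ∀ t : ℝ, IntegrableOn (fun y => 2 * |μ + t - y| * f μ)
      (Set.uIoc μ (μ + t)) volume := by
    intro t
    exact (Continuous.integrableOn_uIoc (by continuity))
  -- the little-o estimate
  rw [isLittleO_iff]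
  intro ε hε
  obtain ⟨δ, hδpos, hδ⟩ := Metric.continuousAt_iff.mp hf_cont (ε / 2) (by positivity)
  filter_upwards [Metric.ball_mem_nhds (0 : ℝ) hδpos] with t ht
  rw [Metric.mem_ball, Real.dist_eq, sub_zero] at ht
  rw [key t, key2 t, ← integral_sub (hint1 t) (hint2 t)]
  have hboundint : IntegrableOn (fun _ : ℝ => 2 * |t| * (ε / 2))
      (Set.uIoc μ (μ + t)) volume := integrableOn_const (by
        rw [hp_vol]; exact ENNReal.ofReal_ne_top) enorm_ne_top
  calc ‖∫ y in Set.uIoc μ (μ + t),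
        (2 * |μ + t - y| * f y - 2 * |μ + t - y| * f μ)‖
      ≤ ∫ y in Set.uIoc μ (μ + t),
        ‖2 * |μ + t - y| * f y - 2 * |μ + t - y| * f μ‖ :=
        norm_integral_le_integral_norm _
    _ ≤ ∫ y in Set.uIoc μ (μ + t), 2 * |t| * (ε / 2) := by
        apply setIntegral_mono_on ((hint1 t).sub (hint2 t)).norm hboundint
          measurableSet_uIoc
        intro y hy
        obtain ⟨h1, h2⟩ := hp_mem_bounds hy
        have h3 : |f y - f μ| ≤ ε / 2 := by
          have := hδ (show dist y μ < δ by rw [Real.dist_eq]; linarith)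
          rw [Real.dist_eq] at this; linarith
        simp only [Pi.sub_apply]
        rw [Real.norm_eq_abs, ← mul_sub, abs_mul,
          abs_of_nonneg (by positivity : (0:ℝ) ≤ 2 * |μ + t - y|)]
        have h4 : (0:ℝ) ≤ |f y - f μ| := abs_nonneg _
        nlinarith [abs_nonneg (μ + t - y), abs_nonneg t]
    _ = |t| * (2 * |t| * (ε / 2)) := by
        rw [setIntegral_const, measureReal_def, hp_vol, smul_eq_mul,
          ENNReal.toReal_ofReal (abs_nonneg t)]
    _ ≤ ε * ‖t ^ 2‖ := by
        rw [Real.norm_eq_abs, abs_of_nonneg (sq_nonneg t)]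
        nlinarith [sq_abs t, abs_nonneg t]
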